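/- Variance-regret transfer under quadratic sandwich: suppose a function class H, Bayes-optimal h*, best-in-class ĥ*, a loss whose extension ℓ̄ satisfies (C/2)(f(a)−f(b))² ≥ ℓ̄(a,b) − ℓ̄(b,b) ≥ (c/2)(f(a)−f(b))² for constants C ≥ c > 0, and define γ_f(h₁,h₂) = E_x[(f(h₁(x)) − f(h₂(x)))²]. Then for every h ∈ H: γ_f(h, ĥ*) ≤ (4/c)·(𝓛(h) − 𝓛(ĥ*)) + 2·(C/c + 1)·γ_f(ĥ*, h*). -/

import Mathlib

open Set

lemma sandwich_sum (f f₁ f₂ : ℝ → ℝ) (c C : ℝ)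
    (hsand : ∀ a ∈ Set.Icc (0:ℝ) 1, ∀ b ∈ Set.Icc (0:ℝ) 1,
      c / 2 * (f a - f b) ^ 2 ≤ (f₁ a + b * f₂ a) - (f₁ b + b * f₂ b) ∧
      (f₁ a + b * f₂ a) - (f₁ b + b * f₂ b) ≤ C / 2 * (f a - f b) ^ 2)
    {a b : ℝ} (ha : a ∈ Set.Icc (0:ℝ) 1) (hb : b ∈ Set.Icc (0:ℝ) 1) :
    c * (f a - f b) ^ 2 ≤ (b - a) * (f₂ a - f₂ b) ∧
      (b - a) * (f₂ a - f₂ b) ≤ C * (f a - f b) ^ 2 := by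
  have h1 := hsand a ha b hb
  have h2 := hsand b hb a ha
  have hsq : (f b - f a) ^ 2 = (f a - f b) ^ 2 := by ring
  rw [hsq] at h2
  constructor <;> nlinarith [h1.1, h1.2, h2.1, h2.2]

lemma sandwich_mono (f f₁ f₂ : ℝ → ℝ) (c C : ℝ) (hc : 0 < c)
    (hsand : ∀ a ∈ Set.Icc (0:ℝ) 1, ∀ b ∈ Set.Icc (0:ℝ) 1,
      c / 2 * (f a - f b) ^ 2 ≤ (f₁ a + b * f₂ a) - (f₁ b + b * f₂ b) ∧
      (f₁ a + b * f₂ a) - (f₁ b + b * f₂ b) ≤ C / 2 * (f a - f b) ^ 2) :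
    MonotoneOn f₁ (Set.Icc (0:ℝ) 1) ∧ AntitoneOn f₂ (Set.Icc (0:ℝ) 1) := by
  have hf2 : AntitoneOn f₂ (Set.Icc (0:ℝ) 1) := by
    intro a ha b hb hab
    rcases eq_or_lt_of_le hab with rfl | hlt
    · exact le_refl _
    · have hs := (sandwich_sum f f₁ f₂ c C hsand ha hb).1
      nlinarith [sq_nonneg (f a - f b), mul_nonneg hc.le (sq_nonneg (f a - f b))]
  refine ⟨?_, hf2⟩
  intro a ha b hb hab
  have h2 := (hsand b hb a ha).1
  have hf2' : f₂ b ≤ f₂ a := hf2 ha hb hab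
  nlinarith [sq_nonneg (f b - f a), ha.1]

lemma sandwich_fiber (f f₁ f₂ : ℝ → ℝ) (c C : ℝ) (hc : 0 < c)
    (hsand : ∀ a ∈ Set.Icc (0:ℝ) 1, ∀ b ∈ Set.Icc (0:ℝ) 1,
      c / 2 * (f a - f b) ^ 2 ≤ (f₁ a + b * f₂ a) - (f₁ b + b * f₂ b) ∧
      (f₁ a + b * f₂ a) - (f₁ b + b * f₂ b) ≤ C / 2 * (f a - f b) ^ 2)
    {a b : ℝ} (ha : a ∈ Set.Icc (0:ℝ) 1) (hb : b ∈ Set.Icc (0:ℝ) 1)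
    (hfe : f a = f b) : f₁ a = f₁ b ∧ f₂ a = f₂ b := by
  rcases eq_or_ne a b with rfl | hne
  · exact ⟨rfl, rfl⟩
  · have hs := sandwich_sum f f₁ f₂ c C hsand ha hb
    have hz : (f a - f b) ^ 2 = 0 := by rw [hfe]; ring
    rw [hz] at hs
    have hprod : (b - a) * (f₂ a - f₂ b) = 0 := le_antisymm (by linarith [hs.2]) (by linarith [hs.1])
    have hba : b - a ≠ 0 := sub_ne_zero.mpr (Ne.symm hne)
    have hf2 : f₂ a = f₂ b := by
      have := mul_eq_zero.mp hprod
      rcases this with h | h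
      · exact absurd h hba
      · linarith [h]
    have h1 := hsand a ha b hb
    rw [hz] at h1
    constructor
    · have hmid : f₁ a + b * f₂ a - (f₁ b + b * f₂ b) = f₁ a - f₁ b := by rw [hf2]; ring
      rw [hmid] at h1
      linarith [h1.1, h1.2]
    · exact hf2

lemma sandwich_const_of_fiber (f f₁ f₂ : ℝ → ℝ) (c C : ℝ) (hc : 0 < c) (hCc : c ≤ C)
    (hf : f = f₁ ∨ f = f₂)
    (hsand : ∀ a ∈ Set.Icc (0:ℝ) 1, ∀ b ∈ Set.Icc (0:ℝ) 1,
      c / 2 * (f a - f b) ^ 2 ≤ (f₁ a + b * f₂ a) - (f₁ b + b * f₂ b) ∧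
      (f₁ a + b * f₂ a) - (f₁ b + b * f₂ b) ≤ C / 2 * (f a - f b) ^ 2)
    {s0 s1 : ℝ} (hs0 : s0 ∈ Set.Icc (0:ℝ) 1) (hs1 : s1 ∈ Set.Icc (0:ℝ) 1)
    (hlt : s0 < s1) (hfe : f s0 = f s1) :
    ∀ x ∈ Set.Icc (0:ℝ) 1, f x = f s0 := by
  -- fiber values
  have hfib : ∀ b ∈ Set.Icc (0:ℝ) 1, f b = f s0 → f₁ b = f₁ s0 ∧ f₂ b = f₂ s0 :=
    fun b hb hbe => sandwich_fiber f f₁ f₂ c C hc hsand hb hs0 hbe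
  -- key gap inequality
  have hkey : ∀ a ∈ Set.Icc (0:ℝ) 1, f a ≠ f s0 →
      ∀ b' ∈ Set.Icc (0:ℝ) 1, f b' = f s0 → 2 * c * (s1 - s0) ≤ (C - c) * |a - b'| := by
    intro a ha hane b' hb' hfb'
    have hΔpos : 0 < (f a - f s0) ^ 2 := by
      have h := sub_ne_zero.mpr hane
      positivity
    obtain ⟨hf1b', hf2b'⟩ := hfib b' hb' hfb'
    obtain ⟨hf1s1, hf2s1⟩ := hfib s1 hs1 hfe.symm
    -- sum inequality with b'
    have h1 : c * (f a - f s0) ^ 2 ≤ (b' - a) * (f₂ a - f₂ s0) := by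
      have hs := (sandwich_sum f f₁ f₂ c C hsand ha hb').1
      rw [hfb', hf2b'] at hs
      exact hs
    -- width inequality using s0 and s1
    have hd0 := hsand a ha s0 hs0
    have hd1 := hsand a ha s1 hs1
    rw [show (f a - f s1) ^ 2 = (f a - f s0) ^ 2 by rw [hfe], hf1s1, hf2s1] at hd1
    have habs1 : (s1 - s0) * |f₂ a - f₂ s0| ≤ (C - c) / 2 * (f a - f s0) ^ 2 := by
      rw [← abs_of_nonneg (by linarith : (0:ℝ) ≤ s1 - s0), ← abs_mul]
      rw [abs_le]
      constructor <;> nlinarith [hd0.1, hd0.2, hd1.1, hd1.2]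
    have habs2 : c * (f a - f s0) ^ 2 ≤ |a - b'| * |f₂ a - f₂ s0| := by
      calc c * (f a - f s0) ^ 2 ≤ (b' - a) * (f₂ a - f₂ s0) := h1
        _ ≤ |(b' - a) * (f₂ a - f₂ s0)| := le_abs_self _
        _ = |a - b'| * |f₂ a - f₂ s0| := by rw [abs_mul, abs_sub_comm]
    have hfin : (2 * c * (s1 - s0)) * (f a - f s0) ^ 2 ≤ ((C - c) * |a - b'|) * (f a - f s0) ^ 2 := by
      nlinarith [mul_le_mul_of_nonneg_left habs1 (abs_nonneg (a - b')),
        mul_le_mul_of_nonneg_left habs2 (by linarith : (0:ℝ) ≤ s1 - s0)]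
    exact le_of_mul_le_mul_right hfin hΔpos
  by_cases hall : ∀ x ∈ Set.Icc (0:ℝ) 1, f x = f s0
  · exact hall
  push_neg at hall
  obtain ⟨a₀, ha₀, hane₀⟩ := hall
  exfalso
  have hCgt : c < C := by
    by_contra hcon
    push_neg at hcon
    have h := hkey a₀ ha₀ hane₀ s0 hs0 rfl
    nlinarith [abs_nonneg (a₀ - s0)]
  set η := 2 * c * (s1 - s0) / (C - c) with hη
  have hηpos : 0 < η := div_pos (by nlinarith) (by linarith)
  have hkey' : ∀ a ∈ Set.Icc (0:ℝ) 1, f a ≠ f s0 →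
      ∀ b' ∈ Set.Icc (0:ℝ) 1, f b' = f s0 → η ≤ |a - b'| := by
    intro a ha hane b' hb' hfb'
    rw [hη, div_le_iff₀ (by linarith : (0:ℝ) < C - c)]
    calc 2 * c * (s1 - s0) ≤ (C - c) * |a - b'| := hkey a ha hane b' hb' hfb'
      _ = |a - b'| * (C - c) := mul_comm _ _
  set I : Set ℝ := {x : ℝ | x ∈ Set.Icc (0:ℝ) 1 ∧ f x = f s0} with hI
  have hs0I : s0 ∈ I := ⟨hs0, rfl⟩
  have hIne : I.Nonempty := ⟨s0, hs0I⟩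
  have hbddA : BddAbove I := ⟨1, fun x hx => hx.1.2⟩
  have hbddB : BddBelow I := ⟨0, fun x hx => hx.1.1⟩
  have hM_le : sSup I ≤ 1 := csSup_le hIne (fun x hx => hx.1.2)
  have hM_ge : s0 ≤ sSup I := le_csSup hbddA hs0I
  have hm_ge : 0 ≤ sInf I := le_csInf hIne (fun x hx => hx.1.1)
  have hm_le : sInf I ≤ s0 := csInf_le hbddB hs0I
  have hM1 : sSup I = 1 := by
    by_contra hne
    have hMlt : sSup I < 1 := lt_of_le_of_ne hM_le hne
    set a := min 1 (sSup I + η / 2) with haa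
    have haM : sSup I < a := lt_min hMlt (by linarith)
    have haIcc : a ∈ Set.Icc (0:ℝ) 1 := ⟨le_min (by norm_num) (by linarith [hs0.1]), min_le_left _ _⟩
    have hfa : f a ≠ f s0 := fun h => absurd (le_csSup hbddA ⟨haIcc, h⟩) (not_le.mpr haM)
    obtain ⟨b', hb'I, hb'gt⟩ := exists_lt_of_lt_csSup hIne (show sSup I - η / 2 < sSup I by linarith)
    have hb'le : b' ≤ sSup I := le_csSup hbddA hb'I
    have hkk := hkey' a haIcc hfa b' hb'I.1 hb'I.2
    have hub : a ≤ sSup I + η / 2 := min_le_right _ _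
    rw [abs_of_pos (by linarith)] at hkk
    linarith
  have hm0 : sInf I = 0 := by
    by_contra hne
    have hmgt : 0 < sInf I := lt_of_le_of_ne hm_ge (Ne.symm hne)
    set a := max 0 (sInf I - η / 2) with haa
    have haM : a < sInf I := max_lt hmgt (by linarith)
    have haIcc : a ∈ Set.Icc (0:ℝ) 1 :=
      ⟨le_max_left _ _, max_le (by norm_num) (by linarith [hs0.2])⟩
    have hfa : f a ≠ f s0 := fun h => absurd (csInf_le hbddB ⟨haIcc, h⟩) (not_le.mpr haM)
    obtain ⟨b', hb'I, hb'lt⟩ := exists_lt_of_csInf_lt hIne (show sInf I < sInf I + η / 2 by linarith)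
    have hb'ge : sInf I ≤ b' := csInf_le hbddB hb'I |> fun h => h
    have hkk := hkey' a haIcc hfa b' hb'I.1 hb'I.2
    have hlb : sInf I - η / 2 ≤ a := le_max_right _ _
    rw [abs_of_neg (by linarith)] at hkk
    linarith
  -- monotone or antitone
  have hmono := sandwich_mono f f₁ f₂ c C hc hsand
  have hf_mono : MonotoneOn f (Set.Icc (0:ℝ) 1) ∨ AntitoneOn f (Set.Icc (0:ℝ) 1) := by
    rcases hf with rfl | rfl
    · exact Or.inl hmono.1
    · exact Or.inr hmono.2
  -- now contradiction with a₀
  rcases eq_or_lt_of_le ha₀.1 with h0 | h0pos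
  · -- a₀ = 0
    obtain ⟨b', hb'I, hb'lt⟩ := exists_lt_of_csInf_lt hIne (by rw [hm0]; exact hηpos)
    have hkk := hkey' a₀ ha₀ hane₀ b' hb'I.1 hb'I.2
    rw [← h0, abs_of_nonpos (by linarith [hb'I.1.1])] at hkk
    linarith [hb'I.1.1]
  rcases eq_or_lt_of_le ha₀.2 with h1 | h1lt
  · -- a₀ = 1
    obtain ⟨b', hb'I, hb'gt⟩ := exists_lt_of_lt_csSup hIne
      (show (1:ℝ) - η / 2 < sSup I by rw [hM1]; linarith)
    have hkk := hkey' a₀ ha₀ hane₀ b' hb'I.1 hb'I.2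
    rw [h1, abs_of_nonneg (by linarith [hb'I.1.2])] at hkk
    linarith [hb'I.1.2]
  · -- 0 < a₀ < 1
    obtain ⟨bl, hblI, hbl⟩ := exists_lt_of_csInf_lt hIne (by rw [hm0]; exact h0pos)
    obtain ⟨bu, hbuI, hbu⟩ := exists_lt_of_lt_csSup hIne (by rw [hM1]; exact h1lt)
    rcases hf_mono with hm | hm
    · have l1 := hm hblI.1 ha₀ hbl.le
      have l2 := hm ha₀ hbuI.1 hbu.le
      rw [hblI.2] at l1
      rw [hbuI.2] at l2
      exact hane₀ (le_antisymm l2 l1)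
    · have l1 := hm hblI.1 ha₀ hbl.le
      have l2 := hm ha₀ hbuI.1 hbu.le
      rw [hblI.2] at l1
      rw [hbuI.2] at l2
      exact hane₀ (le_antisymm l1 l2)

lemma exists_measurable_inverse {f : ℝ → ℝ}
    (hm : MonotoneOn f (Set.Icc (0:ℝ) 1) ∨ AntitoneOn f (Set.Icc (0:ℝ) 1))
    (hinj : Set.InjOn f (Set.Icc (0:ℝ) 1)) :
    ∃ ψ : ℝ → ℝ, Measurable ψ ∧ ∀ r ∈ Set.Icc (0:ℝ) 1, ψ (f r) = r := by
  rcases hm with hm | hm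
  · refine ⟨fun t => sSup ({0} ∪ {r | r ∈ Set.Icc (0:ℝ) 1 ∧ f r ≤ t}), ?_, ?_⟩
    · have hmono : Monotone (fun t => sSup ({0} ∪ {r | r ∈ Set.Icc (0:ℝ) 1 ∧ f r ≤ t})) := by
        intro t t' htt'
        apply csSup_le_csSup
        · refine ⟨1, ?_⟩
          rintro x (hx | hx)
          · simp at hx; simp [hx]
          · exact hx.1.2
        · exact ⟨0, Set.mem_union_left _ (Set.mem_singleton 0)⟩
        · rintro x (hx | hx)
          · exact Set.mem_union_left _ hx
          · exact Set.mem_union_right _ ⟨hx.1, hx.2.trans htt'⟩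
      exact hmono.measurable
    · intro r hr
      show sSup ({0} ∪ {r' | r' ∈ Set.Icc (0:ℝ) 1 ∧ f r' ≤ f r}) = r
      apply le_antisymm
      · apply csSup_le ⟨0, Set.mem_union_left _ (Set.mem_singleton 0)⟩
        rintro x (hx | hx)
        · simp at hx; simp [hx, hr.1]
        · by_contra hcon
          push_neg at hcon
          have hle := hm hr hx.1 hcon.le
          have := hinj hx.1 hr (le_antisymm hx.2 hle)
          exact (ne_of_gt hcon) this
      · apply le_csSup
        · refine ⟨1, ?_⟩
          rintro x (hx | hx)
          · simp at hx; simp [hx]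
          · exact hx.1.2
        · exact Set.mem_union_right _ ⟨hr, le_refl _⟩
  · refine ⟨fun t => sSup ({0} ∪ {r | r ∈ Set.Icc (0:ℝ) 1 ∧ t ≤ f r}), ?_, ?_⟩
    · have hanti : Antitone (fun t => sSup ({0} ∪ {r | r ∈ Set.Icc (0:ℝ) 1 ∧ t ≤ f r})) := by
        intro t t' htt'
        apply csSup_le_csSup
        · refine ⟨1, ?_⟩
          rintro x (hx | hx)
          · simp at hx; simp [hx]
          · exact hx.1.2
        · exact ⟨0, Set.mem_union_left _ (Set.mem_singleton 0)⟩
        · rintro x (hx | hx)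
          · exact Set.mem_union_left _ hx
          · exact Set.mem_union_right _ ⟨hx.1, htt'.trans hx.2⟩
      exact hanti.measurable
    · intro r hr
      show sSup ({0} ∪ {r' | r' ∈ Set.Icc (0:ℝ) 1 ∧ f r ≤ f r'}) = r
      apply le_antisymm
      · apply csSup_le ⟨0, Set.mem_union_left _ (Set.mem_singleton 0)⟩
        rintro x (hx | hx)
        · simp at hx; simp [hx, hr.1]
        · by_contra hcon
          push_neg at hcon
          have hle := hm hr hx.1 hcon.le
          have := hinj hx.1 hr (le_antisymm hle hx.2)
          exact (ne_of_gt hcon) this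
      · apply le_csSup
        · refine ⟨1, ?_⟩
          rintro x (hx | hx)
          · simp at hx; simp [hx]
          · exact hx.1.2
        · exact Set.mem_union_right _ ⟨hr, le_refl _⟩

open MeasureTheory

set_option maxHeartbeats 2000000 in
/-- Variance-regret transfer under the quadratic sandwich condition. -/
theorem variance_regret_transfer
    {X : Type*} [MeasurableSpace X]
    (μ : Measure (X × ℝ)) [IsProbabilityMeasure μ]
    (H : Set (X → ℝ)) (f₁ f₂ f : ℝ → ℝ)
    (hf : f = f₁ ∨ f = f₂)
    (C c : ℝ) (hc : 0 < c) (hCc : c ≤ C)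
    (lbar : ℝ → ℝ → ℝ)
    (hlbar : ∀ a b, lbar a b = f₁ a + b * f₂ a)
    (hsandwich : ∀ a ∈ Set.Icc (0:ℝ) 1, ∀ b ∈ Set.Icc (0:ℝ) 1,
      c / 2 * (f a - f b) ^ 2 ≤ lbar a b - lbar b b ∧
      lbar a b - lbar b b ≤ C / 2 * (f a - f b) ^ 2)
    (L : (X → ℝ) → ℝ)
    (hL : ∀ g : X → ℝ, L g = ∫ z, f₁ (g z.1) + z.2 * f₂ (g z.1) ∂μ)
    (hstar hhat : X → ℝ)
    (hrange : ∀ g ∈ H, ∀ x, g x ∈ Set.Icc (0:ℝ) 1)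
    (hstar_range : ∀ x, hstar x ∈ Set.Icc (0:ℝ) 1)
    (hBayes : ∀ g : X → ℝ, L g = ∫ x, lbar (g x) (hstar x) ∂(μ.map Prod.fst))
    (hhatH : hhat ∈ H)
    (hhat_opt : ∀ g ∈ H, L hhat ≤ L g)
    (hmom : ∀ g ∈ H, MemLp (fun x => f (g x)) 2 (μ.map Prod.fst))
    (hmom_star : MemLp (fun x => f (hstar x)) 2 (μ.map Prod.fst))
    (γ : (X → ℝ) → (X → ℝ) → ℝ)
    (hγ : ∀ g₁ g₂ : X → ℝ,
      γ g₁ g₂ = ∫ x, (f (g₁ x) - f (g₂ x)) ^ 2 ∂(μ.map Prod.fst)) :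
    ∀ g ∈ H, γ g hhat ≤ 4 / c * (L g - L hhat) + 2 * (C / c + 1) * γ hhat hstar := by
  intro g hg
  have hΔLpos : 0 ≤ L g - L hhat := sub_nonneg.mpr (hhat_opt g hg)
  haveI : IsProbabilityMeasure (μ.map (Prod.fst : X × ℝ → X)) :=
    Measure.isProbabilityMeasure_map measurable_fst.aemeasurable
  set ν := μ.map (Prod.fst : X × ℝ → X) with hν
  have hsand : ∀ a ∈ Set.Icc (0:ℝ) 1, ∀ b ∈ Set.Icc (0:ℝ) 1,
      c / 2 * (f a - f b) ^ 2 ≤ (f₁ a + b * f₂ a) - (f₁ b + b * f₂ b) ∧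
      (f₁ a + b * f₂ a) - (f₁ b + b * f₂ b) ≤ C / 2 * (f a - f b) ^ 2 := by
    intro a ha b hb
    have h := hsandwich a ha b hb
    rw [hlbar, hlbar] at h
    exact h
  rw [hγ, hγ]
  by_cases hconst : ∀ x ∈ Set.Icc (0:ℝ) 1, ∀ y ∈ Set.Icc (0:ℝ) 1, f x = f y
  · -- f is constant on [0,1]: all the γ's vanish
    have h1 : (fun x => (f (g x) - f (hhat x)) ^ 2) = fun _ => (0:ℝ) := by
      funext x
      rw [hconst _ (hrange g hg x) _ (hrange hhat hhatH x)]; ring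
    have h2 : (fun x => (f (hhat x) - f (hstar x)) ^ 2) = fun _ => (0:ℝ) := by
      funext x
      rw [hconst _ (hrange hhat hhatH x) _ (hstar_range x)]; ring
    rw [h1, h2, integral_zero]
    have h4c : (0:ℝ) ≤ 4 / c := by positivity
    nlinarith [mul_nonneg h4c hΔLpos]
  · -- f is injective on [0,1]
    push_neg at hconst
    obtain ⟨x₀, hx₀, y₀, hy₀, hneq⟩ := hconst
    have hinj : Set.InjOn f (Set.Icc (0:ℝ) 1) := by
      intro u hu v hv huv
      by_contra hne
      rcases lt_or_gt_of_ne hne with h | h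
      · have hcf := sandwich_const_of_fiber f f₁ f₂ c C hc hCc hf hsand hu hv h huv
        exact hneq ((hcf x₀ hx₀).trans (hcf y₀ hy₀).symm)
      · have hcf := sandwich_const_of_fiber f f₁ f₂ c C hc hCc hf hsand hv hu h huv.symm
        exact hneq ((hcf x₀ hx₀).trans (hcf y₀ hy₀).symm)
    have hmono := sandwich_mono f f₁ f₂ c C hc hsand
    have hf_mono : MonotoneOn f (Set.Icc (0:ℝ) 1) ∨ AntitoneOn f (Set.Icc (0:ℝ) 1) := by
      rcases hf with rfl | rfl
      · exact Or.inl hmono.1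
      · exact Or.inr hmono.2
    obtain ⟨ψ, hψm, hψinv⟩ := exists_measurable_inverse hf_mono hinj
    -- a.e.-measurability of g, hhat, hstar
    have hAae : AEMeasurable (fun x => f (g x)) ν := (hmom g hg).aestronglyMeasurable.aemeasurable
    have hBae : AEMeasurable (fun x => f (hhat x)) ν :=
      (hmom hhat hhatH).aestronglyMeasurable.aemeasurable
    have hSae : AEMeasurable (fun x => f (hstar x)) ν := hmom_star.aestronglyMeasurable.aemeasurable
    have hgae : AEMeasurable g ν := by
      have he : g = fun x => ψ (f (g x)) := funext fun x => (hψinv _ (hrange g hg x)).symm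
      rw [he]; exact hψm.comp_aemeasurable hAae
    have hhae : AEMeasurable hhat ν := by
      have he : hhat = fun x => ψ (f (hhat x)) := funext fun x => (hψinv _ (hrange hhat hhatH x)).symm
      rw [he]; exact hψm.comp_aemeasurable hBae
    have hsae : AEMeasurable hstar ν := by
      have he : hstar = fun x => ψ (f (hstar x)) := funext fun x => (hψinv _ (hstar_range x)).symm
      rw [he]; exact hψm.comp_aemeasurable hSae
    -- measurability of f₁ ∘ u, f₂ ∘ u for u with range in [0,1]
    have hprojIcc : ∀ t : ℝ, max 0 (min t 1) ∈ Set.Icc (0:ℝ) 1 :=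
      fun t => ⟨le_max_left _ _, max_le (by norm_num) (min_le_right _ _)⟩
    have hprojid : ∀ t ∈ Set.Icc (0:ℝ) 1, max 0 (min t 1) = t := by
      intro t ht
      rw [min_eq_left ht.2, max_eq_right ht.1]
    have hP1 : Measurable (fun t => f₁ (max 0 (min t 1))) := by
      have : Monotone (fun t => f₁ (max 0 (min t 1))) := by
        intro a b hab
        exact hmono.1 (hprojIcc a) (hprojIcc b)
          (max_le_max (le_refl 0) (min_le_min hab (le_refl 1)))
      exact this.measurable
    have hP2 : Measurable (fun t => f₂ (max 0 (min t 1))) := by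
      have : Antitone (fun t => f₂ (max 0 (min t 1))) := by
        intro a b hab
        exact hmono.2 (hprojIcc a) (hprojIcc b)
          (max_le_max (le_refl 0) (min_le_min hab (le_refl 1)))
      exact this.measurable
    have hf1comp : ∀ (u : X → ℝ), (∀ x, u x ∈ Set.Icc (0:ℝ) 1) → AEMeasurable u ν →
        AEMeasurable (fun x => f₁ (u x)) ν := by
      intro u hur huae
      have he : (fun x => f₁ (u x)) = fun x => f₁ (max 0 (min (u x) 1)) :=
        funext fun x => by rw [hprojid _ (hur x)]
      rw [he]; exact hP1.comp_aemeasurable huae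
    have hf2comp : ∀ (u : X → ℝ), (∀ x, u x ∈ Set.Icc (0:ℝ) 1) → AEMeasurable u ν →
        AEMeasurable (fun x => f₂ (u x)) ν := by
      intro u hur huae
      have he : (fun x => f₂ (u x)) = fun x => f₂ (max 0 (min (u x) 1)) :=
        funext fun x => by rw [hprojid _ (hur x)]
      rw [he]; exact hP2.comp_aemeasurable huae
    -- integrability of the squared gaps
    have hiqg : Integrable (fun x => (f (g x) - f (hstar x)) ^ 2) ν := by
      have := ((hmom g hg).sub hmom_star).integrable_sq
      simpa using this
    have hiqh : Integrable (fun x => (f (hhat x) - f (hstar x)) ^ 2) ν := by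
      have := ((hmom hhat hhatH).sub hmom_star).integrable_sq
      simpa using this
    have hiqgh : Integrable (fun x => (f (g x) - f (hhat x)) ^ 2) ν := by
      have := ((hmom g hg).sub (hmom hhat hhatH)).integrable_sq
      simpa using this
    -- integrability of the pointwise losses
    have hbnd : ∀ (u : X → ℝ), (∀ x, u x ∈ Set.Icc (0:ℝ) 1) → ∀ x,
        ‖f₁ (u x) + hstar x * f₂ (u x)‖ ≤
          (2 * |f₁ 0| + |f₁ 1| + |f₂ 1|) + C * (f (u x) - f 0) ^ 2
            + C / 2 * (f (u x) - f 1) ^ 2 := by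
      intro u hur x
      have hb0 := hsand (u x) (hur x) 0 ⟨le_refl 0, zero_le_one⟩
      have hb1 := hsand (u x) (hur x) 1 ⟨zero_le_one, le_refl 1⟩
      have hsq0 : (0:ℝ) ≤ (f (u x) - f 0) ^ 2 := sq_nonneg _
      have hsq1 : (0:ℝ) ≤ (f (u x) - f 1) ^ 2 := sq_nonneg _
      have hF1 : |f₁ (u x)| ≤ |f₁ 0| + C / 2 * (f (u x) - f 0) ^ 2 := by
        rw [abs_le]
        constructor <;>
          nlinarith [hb0.1, hb0.2, le_abs_self (f₁ 0), neg_abs_le (f₁ 0),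
            mul_nonneg (by linarith : (0:ℝ) ≤ c / 2) hsq0]
      have hF2 : |f₂ (u x)| ≤ |f₂ 1| + |f₁ 1| + |f₁ (u x)| + C / 2 * (f (u x) - f 1) ^ 2 := by
        rw [abs_le]
        constructor <;>
          nlinarith [hb1.1, hb1.2, le_abs_self (f₂ 1), neg_abs_le (f₂ 1),
            le_abs_self (f₁ 1), neg_abs_le (f₁ 1), le_abs_self (f₁ (u x)),
            neg_abs_le (f₁ (u x)), mul_nonneg (by linarith : (0:ℝ) ≤ c / 2) hsq1]
      have hsx := hstar_range x
      have hmul : |hstar x * f₂ (u x)| ≤ |f₂ (u x)| := by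
        rw [abs_mul]
        have h1 : |hstar x| ≤ 1 := abs_le.mpr ⟨by linarith [hsx.1], hsx.2⟩
        exact mul_le_of_le_one_left (abs_nonneg _) h1
      calc ‖f₁ (u x) + hstar x * f₂ (u x)‖ ≤ |f₁ (u x)| + |hstar x * f₂ (u x)| := abs_add_le _ _
        _ ≤ |f₁ (u x)| + |f₂ (u x)| := by linarith
        _ ≤ (2 * |f₁ 0| + |f₁ 1| + |f₂ 1|) + C * (f (u x) - f 0) ^ 2
            + C / 2 * (f (u x) - f 1) ^ 2 := by linarith
    have hintloss : ∀ (u : X → ℝ), (∀ x, u x ∈ Set.Icc (0:ℝ) 1) → AEMeasurable u ν →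
        MemLp (fun x => f (u x)) 2 ν →
        Integrable (fun x => f₁ (u x) + hstar x * f₂ (u x)) ν := by
      intro u hur huae humom
      have hmaj : Integrable (fun x => (2 * |f₁ 0| + |f₁ 1| + |f₂ 1|)
          + C * (f (u x) - f 0) ^ 2 + C / 2 * (f (u x) - f 1) ^ 2) ν := by
        have i0 : Integrable (fun x => (f (u x) - f 0) ^ 2) ν := by
          have := (humom.sub (memLp_const (f 0))).integrable_sq
          simpa using this
        have i1 : Integrable (fun x => (f (u x) - f 1) ^ 2) ν := by
          have := (humom.sub (memLp_const (f 1))).integrable_sq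
          simpa using this
        exact ((integrable_const _).add (i0.const_mul C)).add (i1.const_mul (C / 2))
      refine Integrable.mono' hmaj ?_ (Filter.Eventually.of_forall (hbnd u hur))
      exact ((hf1comp u hur huae).add (hsae.mul (hf2comp u hur huae))).aestronglyMeasurable
    have hig : Integrable (fun x => f₁ (g x) + hstar x * f₂ (g x)) ν :=
      hintloss g (hrange g hg) hgae (hmom g hg)
    have hih : Integrable (fun x => f₁ (hhat x) + hstar x * f₂ (hhat x)) ν :=
      hintloss hhat (hrange hhat hhatH) hhae (hmom hhat hhatH)
    -- express L via ν
    have hLg : L g = ∫ x, (f₁ (g x) + hstar x * f₂ (g x)) ∂ν := by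
      rw [hBayes g]; simp only [hlbar]
    have hLh : L hhat = ∫ x, (f₁ (hhat x) + hstar x * f₂ (hhat x)) ∂ν := by
      rw [hBayes hhat]; simp only [hlbar]
    -- key excess-risk inequality
    have hkey : c / 2 * (∫ x, (f (g x) - f (hstar x)) ^ 2 ∂ν)
        - C / 2 * (∫ x, (f (hhat x) - f (hstar x)) ^ 2 ∂ν) ≤ L g - L hhat := by
      have hptwise : ∀ x, c / 2 * (f (g x) - f (hstar x)) ^ 2
          - C / 2 * (f (hhat x) - f (hstar x)) ^ 2
          ≤ (f₁ (g x) + hstar x * f₂ (g x)) - (f₁ (hhat x) + hstar x * f₂ (hhat x)) := by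
        intro x
        have h1 := (hsand (g x) (hrange g hg x) (hstar x) (hstar_range x)).1
        have h2 := (hsand (hhat x) (hrange hhat hhatH x) (hstar x) (hstar_range x)).2
        linarith
      have hmono' : ∫ x, (c / 2 * (f (g x) - f (hstar x)) ^ 2
            - C / 2 * (f (hhat x) - f (hstar x)) ^ 2) ∂ν
          ≤ ∫ x, ((f₁ (g x) + hstar x * f₂ (g x)) - (f₁ (hhat x) + hstar x * f₂ (hhat x))) ∂ν :=
        integral_mono ((hiqg.const_mul (c / 2)).sub (hiqh.const_mul (C / 2)))
          (hig.sub hih) hptwise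
      rw [integral_sub (hiqg.const_mul (c / 2)) (hiqh.const_mul (C / 2)),
        integral_sub hig hih] at hmono'
      rw [hLg, hLh]
      calc c / 2 * (∫ x, (f (g x) - f (hstar x)) ^ 2 ∂ν)
            - C / 2 * (∫ x, (f (hhat x) - f (hstar x)) ^ 2 ∂ν)
          = (∫ x, c / 2 * (f (g x) - f (hstar x)) ^ 2 ∂ν)
            - ∫ x, C / 2 * (f (hhat x) - f (hstar x)) ^ 2 ∂ν := by
            rw [integral_const_mul, integral_const_mul]
        _ ≤ _ := hmono'
    -- triangle-type inequality for the integrals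
    have htri : (∫ x, (f (g x) - f (hhat x)) ^ 2 ∂ν)
        ≤ 2 * (∫ x, (f (g x) - f (hstar x)) ^ 2 ∂ν)
          + 2 * (∫ x, (f (hhat x) - f (hstar x)) ^ 2 ∂ν) := by
      have hptwise : ∀ x, (f (g x) - f (hhat x)) ^ 2
          ≤ 2 * (f (g x) - f (hstar x)) ^ 2 + 2 * (f (hhat x) - f (hstar x)) ^ 2 := by
        intro x
        nlinarith [sq_nonneg (f (g x) + f (hhat x) - 2 * f (hstar x))]
      calc (∫ x, (f (g x) - f (hhat x)) ^ 2 ∂ν)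
          ≤ ∫ x, (2 * (f (g x) - f (hstar x)) ^ 2 + 2 * (f (hhat x) - f (hstar x)) ^ 2) ∂ν :=
            integral_mono hiqgh ((hiqg.const_mul 2).add (hiqh.const_mul 2)) hptwise
        _ = 2 * (∫ x, (f (g x) - f (hstar x)) ^ 2 ∂ν)
            + 2 * (∫ x, (f (hhat x) - f (hstar x)) ^ 2 ∂ν) := by
            rw [integral_add (hiqg.const_mul 2) (hiqh.const_mul 2),
              integral_const_mul, integral_const_mul]
    -- final algebra
    set IG := ∫ x, (f (g x) - f (hstar x)) ^ 2 ∂ν with hIG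
    set JH := ∫ x, (f (hhat x) - f (hstar x)) ^ 2 ∂ν with hJH
    have h4 : 4 / c * (c / 2 * IG - C / 2 * JH) ≤ 4 / c * (L g - L hhat) :=
      mul_le_mul_of_nonneg_left hkey (by positivity)
    have hid : 4 / c * (c / 2 * IG - C / 2 * JH) = 2 * IG - 2 * (C / c) * JH := by
      field_simp
      ring
    have hid2 : 2 * (C / c + 1) * JH = 2 * (C / c) * JH + 2 * JH := by ring
    linarith [htri, h4, hid ▸ h4]
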